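/- Let Θ, {P_θ}, {S_θ}, 𝒜, δ be as follows: {S_θ : θ ∈ Θ} is an e-collection for the family of probability measures {P_θ} on 𝒴 (each S_θ : 𝒴 → [0,∞) measurable with ∫ S_θ dP_θ ≤ 1), L : Θ × 𝒜 → [0,∞) is a nonnegative loss function, and δ : 𝒴 → 𝒜 a decision rule. Define R̄(y,a) := sup_{θ∈Θ} (1/S_θ(y))·L(θ,a) with 1/0 := ∞, ∞·0 := 0, ∞·c := ∞ for c > 0. Let 𝒰 be a measurable space, b : 𝒴 × 𝒰 × Θ × 𝒜 → [0,∞) a measurable function, θ ∈ Θ, and P'_θ any probability measure on 𝒴 × 𝒰 whose marginal on 𝒴 equals P_θ. Then E_{(Y,U)∼P'_θ}[ b(Y,U,θ,δ(Y)) · L(θ,δ(Y)) ] ≤ sup_{(y,u,θ') ∈ 𝒴×𝒰×Θ} b(y,u,θ',δ(y)) · R̄(y,δ(y)) (where both sides may be infinite). -/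

import Mathlib

open MeasureTheory ENNReal

/-- Proposition 1, second claim (TheBoundB): for any e-collection `S`, nonnegative loss `L`,
decision rule `δ`, nonnegative weight function `b`, and any probability measure `P'` on
`𝒴 × 𝒰` whose marginal on `𝒴` is `P θ`,
`E_{(Y,U) ∼ P'}[ b(Y,U,θ,δ Y) * L(θ, δ Y) ] ≤ sup_{(y,u,θ')} b(y,u,θ',δ y) * R̄(y, δ y)`,
where both sides may be infinite. -/
theorem e_posterior_risk_bound_weighted
    {Θ 𝒴 𝒰 𝒜 : Type*} [Nonempty Θ] [MeasurableSpace 𝒴] [MeasurableSpace 𝒰]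
    (P : Θ → Measure 𝒴) [∀ θ, IsProbabilityMeasure (P θ)]
    -- the e-collection
    (S : Θ → 𝒴 → ℝ)
    (hS_nonneg : ∀ θ y, 0 ≤ S θ y)
    (hS_meas : ∀ θ, Measurable (S θ))
    (hS_e : ∀ θ, ∫⁻ y, ENNReal.ofReal (S θ y) ∂(P θ) ≤ 1)
    -- the nonnegative loss function
    (L : Θ × 𝒜 → ℝ)
    (hL_nonneg : ∀ θ a, 0 ≤ L (θ, a))
    -- the decision rule
    (δ : 𝒴 → 𝒜)
    (hLδ_meas : ∀ θ, Measurable fun y => L (θ, δ y))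
    -- the e-posterior risk bound `R̄(y, a) = ⨆ θ, (1 / S θ y) * L (θ, a)`
    -- (with `1/0 = ∞`, `∞ * 0 = 0`, `∞ * c = ∞` for `c > 0`)
    (Rbar : 𝒴 → 𝒜 → ℝ≥0∞)
    (hRbar : ∀ y a, Rbar y a =
      ⨆ θ : Θ, (ENNReal.ofReal (S θ y))⁻¹ * ENNReal.ofReal (L (θ, a)))
    -- the nonnegative measurable weight function
    (b : 𝒴 → 𝒰 → Θ → 𝒜 → ℝ)
    (hb_nonneg : ∀ y u θ a, 0 ≤ b y u θ a)
    (hb_meas : ∀ θ, Measurable fun q : 𝒴 × 𝒰 => b q.1 q.2 θ (δ q.1))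
    -- a fixed `θ` and a joint distribution `P'` with `𝒴`-marginal `P θ`
    (θ : Θ)
    (P' : Measure (𝒴 × 𝒰)) [IsProbabilityMeasure P']
    (hP'marg : P'.map Prod.fst = P θ) :
    ∫⁻ q, ENNReal.ofReal (b q.1 q.2 θ (δ q.1)) * ENNReal.ofReal (L (θ, δ q.1)) ∂P'
      ≤ ⨆ (y : 𝒴) (u : 𝒰) (θ' : Θ),
          ENNReal.ofReal (b y u θ' (δ y)) * Rbar y (δ y) := by
  set C := ⨆ (y : 𝒴) (u : 𝒰) (θ' : Θ),
      ENNReal.ofReal (b y u θ' (δ y)) * Rbar y (δ y) with hC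
  rcases eq_or_ne C ⊤ with hCtop | hCtop
  · rw [hCtop]; exact le_top
  have key : ∀ q : 𝒴 × 𝒰,
      ENNReal.ofReal (b q.1 q.2 θ (δ q.1)) * ENNReal.ofReal (L (θ, δ q.1))
        ≤ ENNReal.ofReal (S θ q.1) * C := by
    intro q
    have hle : ENNReal.ofReal (b q.1 q.2 θ (δ q.1)) * Rbar q.1 (δ q.1) ≤ C := by
      rw [hC]
      exact le_iSup_of_le q.1 (le_iSup_of_le q.2 (le_iSup_of_le θ le_rfl))
    have hR : (ENNReal.ofReal (S θ q.1))⁻¹ * ENNReal.ofReal (L (θ, δ q.1))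
        ≤ Rbar q.1 (δ q.1) := by
      rw [hRbar]
      exact le_iSup (fun θ' => (ENNReal.ofReal (S θ' q.1))⁻¹
        * ENNReal.ofReal (L (θ', δ q.1))) θ
    rcases eq_or_ne (ENNReal.ofReal (S θ q.1)) 0 with hS0 | hS0
    · rcases eq_or_ne (ENNReal.ofReal (b q.1 q.2 θ (δ q.1))) 0 with hb0 | hb0
      · rw [hb0, zero_mul]; exact zero_le
      rcases eq_or_ne (ENNReal.ofReal (L (θ, δ q.1))) 0 with hL0 | hL0
      · rw [hL0, mul_zero]; exact zero_le
      exfalso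
      apply hCtop
      have : (⊤ : ℝ≥0∞) ≤ C := by
        refine le_trans ?_ hle
        have h1 : (ENNReal.ofReal (S θ q.1))⁻¹ * ENNReal.ofReal (L (θ, δ q.1)) = ⊤ := by
          rw [hS0, ENNReal.inv_zero]
          exact ENNReal.top_mul hL0
        have h2 : Rbar q.1 (δ q.1) = ⊤ := top_le_iff.mp (h1 ▸ hR)
        rw [h2, ENNReal.mul_top hb0]
      exact top_le_iff.mp this
    · have hSne : ENNReal.ofReal (S θ q.1) ≠ ⊤ := ENNReal.ofReal_ne_top
      have hcancel : ENNReal.ofReal (S θ q.1) * (ENNReal.ofReal (S θ q.1))⁻¹ = 1 :=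
        ENNReal.mul_inv_cancel hS0 hSne
      calc ENNReal.ofReal (b q.1 q.2 θ (δ q.1)) * ENNReal.ofReal (L (θ, δ q.1))
          = ENNReal.ofReal (S θ q.1) * (ENNReal.ofReal (b q.1 q.2 θ (δ q.1)) *
            ((ENNReal.ofReal (S θ q.1))⁻¹ * ENNReal.ofReal (L (θ, δ q.1)))) := by
            rw [mul_left_comm (ENNReal.ofReal (S θ q.1)),
              ← mul_assoc (ENNReal.ofReal (S θ q.1)), hcancel, one_mul]
        _ ≤ ENNReal.ofReal (S θ q.1) * (ENNReal.ofReal (b q.1 q.2 θ (δ q.1)) *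
              Rbar q.1 (δ q.1)) := mul_le_mul_right (mul_le_mul_right hR _) _
        _ ≤ ENNReal.ofReal (S θ q.1) * C := mul_le_mul_right hle _
  have hmeasS : Measurable fun q : 𝒴 × 𝒰 => ENNReal.ofReal (S θ q.1) :=
    ((hS_meas θ).comp measurable_fst).ennreal_ofReal
  calc ∫⁻ q, ENNReal.ofReal (b q.1 q.2 θ (δ q.1)) * ENNReal.ofReal (L (θ, δ q.1)) ∂P'
      ≤ ∫⁻ q, ENNReal.ofReal (S θ q.1) * C ∂P' := lintegral_mono key
    _ = (∫⁻ q, ENNReal.ofReal (S θ q.1) ∂P') * C := lintegral_mul_const C hmeasS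
    _ = (∫⁻ y, ENNReal.ofReal (S θ y) ∂(P θ)) * C := by
        rw [← hP'marg, lintegral_map (hS_meas θ).ennreal_ofReal measurable_fst]
    _ ≤ 1 * C := mul_le_mul_left (hS_e θ) C
    _ = C := one_mul C
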